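/- arXiv:hep-th/0403164 — 2 statements merged into one kernel-verified Lean document; each statement's English description precedes it below -/
import Mathlib

section
/- Let E₀ be an invertible n×n real matrix and let Π be an antisymmetric n×n real matrix such that E₀⁻¹ + Π is invertible; set E = (E₀⁻¹ + Π)⁻¹. If E₀ is symmetric and positive definite, then E₀⁻¹ + Π is automatically invertible and the symmetric part of E is positive definite. -/
open Matrix

private lemma real_conjTranspose_eq_transpose {n : ℕ} (B : Matrix (Fin n) (Fin n) ℝ) :
    Bᴴ = Bᵀ := by
  ext i j; simp [conjTranspose_apply, transpose_apply]

private lemma posDef_conj {n : ℕ} {M B : Matrix (Fin n) (Fin n) ℝ}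
    (hM : M.PosDef) (hB : IsUnit B) : (B * M * Bᵀ).PosDef := by
  rw [posDef_iff_dotProduct_mulVec]
  constructor
  · show (B * M * Bᵀ)ᴴ = B * M * Bᵀ
    rw [real_conjTranspose_eq_transpose, transpose_mul, transpose_mul,
      transpose_transpose]
    have hMs : Mᵀ = M := by
      rw [← real_conjTranspose_eq_transpose]; exact hM.1
    rw [hMs, Matrix.mul_assoc]
  · intro x hx
    have hBT : IsUnit Bᵀ := by
      rw [isUnit_iff_isUnit_det, det_transpose, ← isUnit_iff_isUnit_det]
      exact hB
    have hy : Bᵀ.mulVec x ≠ 0 := by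
      intro h
      apply hx
      exact mulVec_injective_iff_isUnit.2 hBT (by simpa using h : Bᵀ.mulVec x = Bᵀ.mulVec 0)
    have key : star x ⬝ᵥ (B * M * Bᵀ).mulVec x
        = star (Bᵀ.mulVec x) ⬝ᵥ M.mulVec (Bᵀ.mulVec x) := by
      simp only [star_trivial, ← mulVec_mulVec]
      rw [Matrix.dotProduct_mulVec x B, ← Matrix.mulVec_transpose,
        Matrix.dotProduct_mulVec]
    rw [key]
    exact hM.dotProduct_mulVec_pos hy

/-- if `E₀` is symmetric positive definite and `Π` is antisymmetric, then
`E₀⁻¹ + Π` is invertible and the symmetric part of `E = (E₀⁻¹ + Π)⁻¹` is positive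
definite. -/
theorem sym_part_posDef_of_posDef (n : ℕ)
    (E₀ Pi : Matrix (Fin n) (Fin n) ℝ)
    (hPi : Piᵀ = -Pi)
    (hsymm : E₀.IsSymm) (hpos : E₀.PosDef) :
    IsUnit (E₀⁻¹ + Pi) ∧
      ((1/2 : ℝ) • ((E₀⁻¹ + Pi)⁻¹ + ((E₀⁻¹ + Pi)⁻¹)ᵀ)).PosDef := by
  set A := E₀⁻¹ + Pi with hA
  have hinv : E₀⁻¹.PosDef := hpos.inv
  have hPiQ : ∀ x : Fin n → ℝ, x ⬝ᵥ Pi.mulVec x = 0 := by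
    intro x
    have h : x ⬝ᵥ Pi.mulVec x = -(x ⬝ᵥ Pi.mulVec x) := by
      conv_lhs => rw [Matrix.dotProduct_mulVec, ← Matrix.mulVec_transpose, hPi,
        Matrix.neg_mulVec]
      rw [neg_dotProduct, dotProduct_comm]
    linarith
  have hquad : ∀ x : Fin n → ℝ, x ≠ 0 → 0 < x ⬝ᵥ A.mulVec x := by
    intro x hx
    have : x ⬝ᵥ A.mulVec x = x ⬝ᵥ E₀⁻¹.mulVec x + x ⬝ᵥ Pi.mulVec x := by
      rw [hA, add_mulVec, dotProduct_add]
    rw [this, hPiQ x, add_zero]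
    simpa using hinv.dotProduct_mulVec_pos hx
  have hAunit : IsUnit A := by
    rw [← mulVec_injective_iff_isUnit]
    intro x y hxy
    by_contra hne
    have h0 : A.mulVec (x - y) = 0 := by
      rw [mulVec_sub, hxy, sub_self]
    have := hquad (x - y) (sub_ne_zero.2 hne)
    rw [h0] at this
    simp at this
  refine ⟨hAunit, ?_⟩
  have hdet : IsUnit A.det := (isUnit_iff_isUnit_det A).mp hAunit
  have hdetT : IsUnit Aᵀ.det := isUnit_det_transpose A hdet
  have hE0symm : (E₀⁻¹)ᵀ = E₀⁻¹ := by
    rw [transpose_nonsing_inv, hsymm.eq]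
  have hAT : Aᵀ = E₀⁻¹ - Pi := by
    rw [hA, transpose_add, hE0symm, hPi, sub_eq_add_neg]
  have hsum : A + Aᵀ = (2 : ℝ) • E₀⁻¹ := by
    rw [hAT, hA]; module
  have hinvT : (A⁻¹)ᵀ = (Aᵀ)⁻¹ := transpose_nonsing_inv A
  have h1 : A⁻¹ * A = 1 := nonsing_inv_mul A hdet
  have h2 : Aᵀ * (Aᵀ)⁻¹ = 1 := mul_nonsing_inv Aᵀ hdetT
  have key : A⁻¹ + (A⁻¹)ᵀ = A⁻¹ * ((2:ℝ) • E₀⁻¹) * (A⁻¹)ᵀ := by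
    rw [← hsum, hinvT, Matrix.mul_add, Matrix.add_mul,
      Matrix.mul_assoc A⁻¹ Aᵀ, h2, Matrix.mul_one, h1, Matrix.one_mul, add_comm]
  have key2 : (1/2 : ℝ) • (A⁻¹ + (A⁻¹)ᵀ) = A⁻¹ * E₀⁻¹ * (A⁻¹)ᵀ := by
    rw [key, Matrix.mul_smul, Matrix.smul_mul, smul_smul]
    norm_num
  rw [key2, hinvT]
  have : (A⁻¹)ᵀ = (Aᵀ)⁻¹ := hinvT
  have hBunit : IsUnit A⁻¹ := isUnit_nonsing_inv_iff.mpr hAunit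
  have := posDef_conj hinv hBunit
  rwa [hinvT] at this
end

section
/- The pseudo-Riemannian metric on ℝ³ given by G = [[p, 0, pφ²],[0, p, -pφ¹],[pφ², -pφ¹, r + p(φ¹)² + p(φ²)²]] (with p, r nonzero real constants) has vanishing Riemann curvature tensor. -/
open scoped BigOperators

/-- Partial derivative in the `i`-th coordinate direction on `ℝ³`. -/
noncomputable def pd (i : Fin 3) (f : (Fin 3 → ℝ) → ℝ) (x : Fin 3 → ℝ) : ℝ :=
  fderiv ℝ f x (Pi.single i 1)

/-- Christoffel symbols `Γ^k_{ij}` of the Levi-Civita connection of the metric `g`. -/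
noncomputable def christoffel (g : (Fin 3 → ℝ) → Matrix (Fin 3) (Fin 3) ℝ)
    (k i j : Fin 3) (x : Fin 3 → ℝ) : ℝ :=
  (1/2) * ∑ l, (g x)⁻¹ k l *
    (pd i (fun y => g y l j) x + pd j (fun y => g y l i) x - pd l (fun y => g y i j) x)

/-- Riemann curvature tensor `R^l_{kij}`. -/
noncomputable def riemann (g : (Fin 3 → ℝ) → Matrix (Fin 3) (Fin 3) ℝ)
    (l k i j : Fin 3) (x : Fin 3 → ℝ) : ℝ :=
  pd i (fun y => christoffel g l j k y) x - pd j (fun y => christoffel g l i k y) x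
    + ∑ m, (christoffel g l i m x * christoffel g m j k x
        - christoffel g l j m x * christoffel g m i k x)

/-- Ricci tensor `R_{jk} = R^i_{jik}`. -/
noncomputable def ricci (g : (Fin 3 → ℝ) → Matrix (Fin 3) (Fin 3) ℝ)
    (j k : Fin 3) (x : Fin 3 → ℝ) : ℝ :=
  ∑ i, riemann g i j i k x

/-- Scalar curvature `R = g^{jk} R_{jk}`. -/
noncomputable def scalarCurv (g : (Fin 3 → ℝ) → Matrix (Fin 3) (Fin 3) ℝ)
    (x : Fin 3 → ℝ) : ℝ :=
  ∑ j, ∑ k, (g x)⁻¹ j k * ricci g j k x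

/-- The metric of the sigma model coming from the decomposition (7₀|1). -/
noncomputable def metric701 (p r : ℝ) (x : Fin 3 → ℝ) : Matrix (Fin 3) (Fin 3) ℝ :=
  !![p, 0, p * x 1;
     0, p, -p * x 0;
     p * x 1, -p * x 0, r + p * (x 0)^2 + p * (x 1)^2]

lemma pd_const (c : ℝ) (i : Fin 3) (x : Fin 3 → ℝ) : pd i (fun _ => c) x = 0 := by
  simp [pd]

lemma pd_cmul (c : ℝ) (j i : Fin 3) (x : Fin 3 → ℝ) :
    pd i (fun y => c * y j) x = c * (Pi.single i 1 : Fin 3 → ℝ) j := by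
  have h : HasFDerivAt (fun y : Fin 3 → ℝ => c * y j)
      (c • (ContinuousLinearMap.proj j : (Fin 3 → ℝ) →L[ℝ] ℝ)) x :=
    ((ContinuousLinearMap.proj j : (Fin 3 → ℝ) →L[ℝ] ℝ).hasFDerivAt).const_mul c
  rw [pd, h.fderiv]; simp

lemma pd_neg_cmul (c : ℝ) (j i : Fin 3) (x : Fin 3 → ℝ) :
    pd i (fun y => -(c * y j)) x = -(c * (Pi.single i 1 : Fin 3 → ℝ) j) := by
  have h : HasFDerivAt (fun y : Fin 3 → ℝ => -(c * y j))
      (-(c • (ContinuousLinearMap.proj j : (Fin 3 → ℝ) →L[ℝ] ℝ))) x :=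
    (((ContinuousLinearMap.proj j : (Fin 3 → ℝ) →L[ℝ] ℝ).hasFDerivAt).const_mul c).neg
  rw [pd, h.fderiv]; simp

lemma pd_neg_coord (j i : Fin 3) (x : Fin 3 → ℝ) :
    pd i (fun y => -y j) x = -(Pi.single i 1 : Fin 3 → ℝ) j := by
  have h : HasFDerivAt (fun y : Fin 3 → ℝ => -y j)
      (-(ContinuousLinearMap.proj j : (Fin 3 → ℝ) →L[ℝ] ℝ)) x :=
    ((ContinuousLinearMap.proj j : (Fin 3 → ℝ) →L[ℝ] ℝ).hasFDerivAt).neg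
  rw [pd, h.fderiv]; simp

lemma pd_quad (c r : ℝ) (i : Fin 3) (x : Fin 3 → ℝ) :
    pd i (fun y => r + c * (y 0)^2 + c * (y 1)^2) x
      = 2 * c * x 0 * (Pi.single i 1 : Fin 3 → ℝ) 0
        + 2 * c * x 1 * (Pi.single i 1 : Fin 3 → ℝ) 1 := by
  have h0 : HasFDerivAt (fun y : Fin 3 → ℝ => y 0)
      (ContinuousLinearMap.proj 0 : (Fin 3 → ℝ) →L[ℝ] ℝ) x :=
    (ContinuousLinearMap.proj 0 : (Fin 3 → ℝ) →L[ℝ] ℝ).hasFDerivAt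
  have h1 : HasFDerivAt (fun y : Fin 3 → ℝ => y 1)
      (ContinuousLinearMap.proj 1 : (Fin 3 → ℝ) →L[ℝ] ℝ) x :=
    (ContinuousLinearMap.proj 1 : (Fin 3 → ℝ) →L[ℝ] ℝ).hasFDerivAt
  have hs0 : HasFDerivAt (fun y : Fin 3 → ℝ => (y 0)^2)
      (x 0 • (ContinuousLinearMap.proj 0 : (Fin 3 → ℝ) →L[ℝ] ℝ)
        + x 0 • (ContinuousLinearMap.proj 0 : (Fin 3 → ℝ) →L[ℝ] ℝ)) x := by
    have hm := h0.mul h0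
    simp only [Pi.mul_def] at hm
    simpa [pow_two] using hm
  have hs1 : HasFDerivAt (fun y : Fin 3 → ℝ => (y 1)^2)
      (x 1 • (ContinuousLinearMap.proj 1 : (Fin 3 → ℝ) →L[ℝ] ℝ)
        + x 1 • (ContinuousLinearMap.proj 1 : (Fin 3 → ℝ) →L[ℝ] ℝ)) x := by
    have hm := h1.mul h1
    simp only [Pi.mul_def] at hm
    simpa [pow_two] using hm
  have h : HasFDerivAt (fun y : Fin 3 → ℝ => r + c * (y 0)^2 + c * (y 1)^2) _ x :=
    ((hasFDerivAt_const r x).add (hs0.const_mul c)).add (hs1.const_mul c)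
  rw [pd, h.fderiv]; simp; ring

lemma inv_metric701 (p r : ℝ) (hp : p ≠ 0) (hr : r ≠ 0) (x : Fin 3 → ℝ) :
    (metric701 p r x)⁻¹ =
      !![1/p + (x 1)^2/r, -(x 0 * x 1)/r, -(x 1)/r;
         -(x 0 * x 1)/r, 1/p + (x 0)^2/r, x 0/r;
         -(x 1)/r, x 0/r, 1/r] := by
  apply Matrix.inv_eq_right_inv
  ext i j
  fin_cases i <;> fin_cases j <;>
    simp [metric701, Matrix.mul_apply, Fin.sum_univ_three] <;> field_simp <;> ring

noncomputable def Gam (k i j : Fin 3) (x : Fin 3 → ℝ) : ℝ :=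
  if k = 0 ∧ ((i = 1 ∧ j = 2) ∨ (i = 2 ∧ j = 1)) then 1
  else if k = 1 ∧ ((i = 0 ∧ j = 2) ∨ (i = 2 ∧ j = 0)) then -1
  else if k = 0 ∧ i = 2 ∧ j = 2 then -x 0
  else if k = 1 ∧ i = 2 ∧ j = 2 then -x 1
  else 0

lemma christoffel_val (p r : ℝ) (hp : p ≠ 0) (hr : r ≠ 0) (k i j : Fin 3) (x : Fin 3 → ℝ) :
    christoffel (metric701 p r) k i j x = Gam k i j x := by
  fin_cases k <;> fin_cases i <;> fin_cases j <;>
  · rw [christoffel, inv_metric701 p r hp hr x]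
    simp [metric701, Fin.sum_univ_three, pd_const, pd_cmul, pd_neg_cmul, pd_neg_coord, pd_quad,
      Pi.single_apply, Gam]
    try field_simp
    try ring

/-- the metric of the (7₀|1) sigma model is flat. -/
theorem riemann_metric701_eq_zero (p r : ℝ) (hp : p ≠ 0) (hr : r ≠ 0) :
    ∀ (l k i j : Fin 3) (x : Fin 3 → ℝ), riemann (metric701 p r) l k i j x = 0 := by
  intro l k i j x
  rw [riemann]
  simp only [christoffel_val p r hp hr, Fin.sum_univ_three]
  fin_cases l <;> fin_cases k <;> fin_cases i <;> fin_cases j <;>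
  · simp [Gam, pd_const, pd_neg_coord, Pi.single_apply]
    try ring
end
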